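/- Let p ≥ 5 be a prime and n a positive integer, and let X_1, …, X_p ⊆ 𝔽_p^n be such that every cycle (x_1, …, x_p) ∈ X_1 × ⋯ × X_p satisfies x_1 = x_2. Then for any two distinct 3-extendable pairs (y, z), (y', z') ∈ X_1 × X_3, one has y + z ≠ y' + z'. -/
import Mathlib


/-- Suppose `X_1, …, X_p ⊆ 𝔽_p^n` are such that every cycle (p-tuple summing to zero)
`(x_1, …, x_p) ∈ X_1 × ⋯ × X_p` satisfies `x_1 = x_2`. Then any two distinct
`3`-extendable pairs `(y,z), (y',z') ∈ X_1 × X_3` satisfy `y + z ≠ y' + z'`.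
Here `(y,z)` is `3`-extendable if there is a cycle `(x_1, …, x_p) ∈ X_1 × ⋯ × X_p`
with `x_1 = y` and `x_3 = z`. -/
theorem stmt9 {p n : ℕ} (hp : p.Prime) (hp5 : 5 ≤ p) (hn : 0 < n)
    (X : Fin p → Set (Fin n → ZMod p))
    (hX : ∀ x : Fin p → (Fin n → ZMod p), (∀ i, x i ∈ X i) → ∑ i, x i = 0 →
      x ⟨0, by omega⟩ = x ⟨1, by omega⟩)
    (y z y' z' : Fin n → ZMod p)
    (hyz : y ∈ X ⟨0, by omega⟩ ∧ z ∈ X ⟨2, by omega⟩ ∧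
      ∃ x : Fin p → (Fin n → ZMod p), (∀ i, x i ∈ X i) ∧ ∑ i, x i = 0 ∧
        x ⟨0, by omega⟩ = y ∧ x ⟨2, by omega⟩ = z)
    (hyz' : y' ∈ X ⟨0, by omega⟩ ∧ z' ∈ X ⟨2, by omega⟩ ∧
      ∃ x : Fin p → (Fin n → ZMod p), (∀ i, x i ∈ X i) ∧ ∑ i, x i = 0 ∧
        x ⟨0, by omega⟩ = y' ∧ x ⟨2, by omega⟩ = z')
    (hne : (y, z) ≠ (y', z')) :
    y + z ≠ y' + z' := by
  intro heq
  obtain ⟨hy, hz, x, hxmem, hxsum, hx0, hx2⟩ := hyz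
  obtain ⟨hy', hz', -⟩ := hyz'
  set a0 : Fin p := ⟨0, by omega⟩ with ha0
  set a1 : Fin p := ⟨1, by omega⟩ with ha1
  set a2 : Fin p := ⟨2, by omega⟩ with ha2
  have h02 : a0 ≠ a2 := by simp [ha0, ha2, Fin.ext_iff]
  have h12 : a1 ≠ a2 := by simp [ha1, ha2, Fin.ext_iff]
  have h10 : a1 ≠ a0 := by simp [ha1, ha0, Fin.ext_iff]
  -- x at position 1 equals y
  have hkey : x a1 = y := by rw [← hX x hxmem hxsum, hx0]
  -- modified cycle
  set w : Fin p → (Fin n → ZMod p) :=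
    Function.update (Function.update x a0 y') a2 z' with hw
  have hwmem : ∀ i, w i ∈ X i := by
    intro i
    rcases eq_or_ne i a2 with rfl | hi2
    · simpa [hw] using hz'
    · rcases eq_or_ne i a0 with rfl | hi0
      · simpa [hw, Function.update_of_ne h02] using hy'
      · simpa [hw, Function.update_of_ne hi2, Function.update_of_ne hi0] using hxmem i
  have hwsum : ∑ i, w i = 0 := by
    have hs2 : (a0 : Fin p) ∈ Finset.univ \ {a2} := by
      simp [h02]
    have e1 : ∑ i, w i = z' + (y' + ∑ i ∈ (Finset.univ \ {a2}) \ {a0}, x i) := by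
      rw [hw, Finset.sum_update_of_mem (Finset.mem_univ a2),
        Finset.sum_update_of_mem hs2]
    have e2 : ∑ i, x i = z + (y + ∑ i ∈ (Finset.univ \ {a2}) \ {a0}, x i) := by
      have : ∑ i, x i = x a2 + ∑ i ∈ Finset.univ \ {a2}, x i := by
        rw [Finset.sdiff_singleton_eq_erase, Finset.add_sum_erase _ _ (Finset.mem_univ a2)]
      rw [this, hx2]
      congr 1
      rw [Finset.sdiff_singleton_eq_erase (a0 : Fin p), ← hx0]
      exact (Finset.add_sum_erase _ x hs2).symm
    rw [e1]
    have := hxsum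
    rw [e2] at this
    have h3 : z' + (y' + ∑ i ∈ (Finset.univ \ {a2}) \ {a0}, x i)
        = (y' + z') - (y + z) + (z + (y + ∑ i ∈ (Finset.univ \ {a2}) \ {a0}, x i)) := by
      abel
    rw [h3, this, ← heq]
    abel
  have hw01 := hX w hwmem hwsum
  have hwy' : w a0 = y' := by
    simp [hw, Function.update_of_ne h02]
  have hwx1 : w a1 = x a1 := by
    simp [hw, Function.update_of_ne h12, Function.update_of_ne h10]
  have hyy' : y = y' := by rw [← hwy', hw01, hwx1, hkey]
  have hzz' : z = z' := by
    have := heq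
    rw [← hyy'] at this
    exact add_left_cancel this
  exact hne (by rw [hyy', hzz'])
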